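/- For integers d, q ≥ 2, if a finite simple graph G is q-locatable in ℤ^d, then G is q^d-colorable. -/

import Mathlib

open SimpleGraph

/-- Cast an integer grid point to a real point. -/
def castPt {d : ℕ} (p : Fin d → ℤ) : Fin d → ℝ := fun i => (p i : ℝ)

/-- The grid points lying on the closed segment in `ℝ^d` joining `a` and `b`. -/
def segGridPts {d : ℕ} (a b : Fin d → ℤ) : Set (Fin d → ℤ) :=
  {p | castPt p ∈ segment ℝ (castPt a) (castPt b)}

/-- `φ` is a grid drawing of `G` in `ℤ^d`: it is injective and no vertex image other than the
endpoints lies on the closed segment representing an edge. -/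
def IsGridDrawing {V : Type*} {d : ℕ} (G : SimpleGraph V) (φ : V → Fin d → ℤ) : Prop :=
  Function.Injective φ ∧
    ∀ u v w : V, G.Adj u v →
      castPt (φ w) ∈ segment ℝ (castPt (φ u)) (castPt (φ v)) → w = u ∨ w = v

/-- `G` is `q`-locatable in `ℤ^d`: it has a grid drawing in which every edge segment contains
at most `q` grid points. -/
def IsQLocatable {V : Type*} (G : SimpleGraph V) (d q : ℕ) : Prop :=
  ∃ φ : V → Fin d → ℤ, IsGridDrawing G φ ∧
    ∀ u v : V, G.Adj u v → (segGridPts (φ u) (φ v)).ncard ≤ q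

/-- A primitive grid drawing: every edge segment contains exactly its two endpoints
as grid points. -/
def IsPrimitiveDrawing {V : Type*} {d : ℕ} (G : SimpleGraph V) (φ : V → Fin d → ℤ) : Prop :=
  IsGridDrawing G φ ∧ ∀ u v : V, G.Adj u v → segGridPts (φ u) (φ v) = {φ u, φ v}

/-- `G` is locatable in `ℤ^d`: it has a primitive grid drawing in `ℤ^d`. -/
def IsLocatable {V : Type*} (G : SimpleGraph V) (d : ℕ) : Prop :=
  ∃ φ : V → Fin d → ℤ, IsPrimitiveDrawing G φ

/-- The rank of a grid point in `ℤ^d`: the tuple of its first `d - 1` coordinates. -/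
def rank {d : ℕ} (p : Fin d → ℤ) : Fin (d - 1) → ℤ :=
  fun i => p (Fin.castLE (Nat.sub_le d 1) i)

/-- `G` is embeddable on `l` columns: it has a grid drawing in `ℤ²` in which the first
coordinates of the vertex images take at most `l` distinct values. -/
def EmbeddableOnCols {V : Type*} (G : SimpleGraph V) (l : ℕ) : Prop :=
  ∃ φ : V → Fin 2 → ℤ, IsGridDrawing G φ ∧ (Set.range fun v => φ v 0).ncard ≤ l

/-- `G` can be located on `l` columns in `ℤ^d`: it has a primitive grid drawing in `ℤ^d`
using at most `l` columns. -/
def LocatableOnCols {V : Type*} (G : SimpleGraph V) (d l : ℕ) : Prop :=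
  ∃ φ : V → Fin d → ℤ, IsPrimitiveDrawing G φ ∧ (Set.range fun v => rank (φ v)).ncard ≤ l

/-- A linear forest: an acyclic graph with maximum degree at most two
(i.e. a disjoint union of paths). -/
def IsLinearForest {W : Type*} (H : SimpleGraph W) : Prop :=
  H.IsAcyclic ∧ ∀ v : W, {w | H.Adj v w}.ncard ≤ 2

private lemma segGridPts_finite {d : ℕ} (a b : Fin d → ℤ) : (segGridPts a b).Finite := by
  apply Set.Finite.subset
    (Set.Finite.pi (fun i => Set.finite_Icc (min (a i) (b i)) (max (a i) (b i))))
  intro p hp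
  obtain ⟨x, y, hx, hy, hxy, hp⟩ := hp
  intro i _
  have hi : (p i : ℝ) = x * a i + y * b i := by
    have := congrFun hp i
    simpa [castPt, smul_eq_mul] using this.symm
  constructor
  · have : ((min (a i) (b i) : ℤ) : ℝ) ≤ (p i : ℝ) := by
      rw [hi]
      have h1 : (min (a i) (b i) : ℝ) ≤ a i := by push_cast [min_le_iff]; left; rfl
      have h2 : (min (a i) (b i) : ℝ) ≤ b i := by push_cast [min_le_iff]; right; rfl
      calc ((min (a i) (b i) : ℤ) : ℝ) = (x + y) * ((min (a i) (b i) : ℤ) : ℝ) := by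
            rw [hxy, one_mul]
        _ = x * ((min (a i) (b i) : ℤ) : ℝ) + y * ((min (a i) (b i) : ℤ) : ℝ) := by ring
        _ ≤ x * a i + y * b i := by
            push_cast at h1 h2 ⊢
            exact add_le_add (mul_le_mul_of_nonneg_left h1 hx)
              (mul_le_mul_of_nonneg_left h2 hy)
    exact_mod_cast this
  · have : (p i : ℝ) ≤ ((max (a i) (b i) : ℤ) : ℝ) := by
      rw [hi]
      have h1 : (a i : ℝ) ≤ (max (a i) (b i) : ℤ) := by push_cast [le_max_iff]; left; rfl
      have h2 : (b i : ℝ) ≤ (max (a i) (b i) : ℤ) := by push_cast [le_max_iff]; right; rfl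
      calc x * (a i : ℝ) + y * b i
          ≤ x * ((max (a i) (b i) : ℤ) : ℝ) + y * ((max (a i) (b i) : ℤ) : ℝ) := by
            push_cast at h1 h2 ⊢
            exact add_le_add (mul_le_mul_of_nonneg_left h1 hx)
              (mul_le_mul_of_nonneg_left h2 hy)
        _ = ((max (a i) (b i) : ℤ) : ℝ) := by rw [← add_mul, hxy, one_mul]
    exact_mod_cast this

theorem colorable_of_qLocatable {V : Type*} [Fintype V] (G : SimpleGraph V)
    (d q : ℕ) (hd : 2 ≤ d) (hq : 2 ≤ q) (h : IsQLocatable G d q) :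
    G.Colorable (q ^ d) := by
  obtain ⟨φ, ⟨hinj, _⟩, hcnt⟩ := h
  haveI : NeZero q := ⟨by omega⟩
  have hproper : ∀ {u v : V}, G.Adj u v →
      (fun i => ((φ u i : ZMod q))) ≠ (fun i => ((φ v i : ZMod q))) := by
    intro u v hadj hc
    have hdvd : ∀ i, (q : ℤ) ∣ φ v i - φ u i := by
      intro i
      rw [← ZMod.intCast_zmod_eq_zero_iff_dvd]
      push_cast
      rw [sub_eq_zero]
      exact (congrFun hc i).symm
    set c : Fin d → ℤ := fun i => (φ v i - φ u i) / q with hcdef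
    have hci : ∀ i, φ v i - φ u i = q * c i := fun i =>
      (Int.mul_ediv_cancel' (hdvd i)).symm
    have hne : φ u ≠ φ v := fun h' => (G.ne_of_adj hadj) (hinj h')
    have hc0 : ∃ i, c i ≠ 0 := by
      by_contra h0
      push_neg at h0
      apply hne
      funext i
      have := hci i
      rw [h0 i, mul_zero, sub_eq_zero] at this
      exact this.symm
    obtain ⟨i₀, hi₀⟩ := hc0
    set f : Fin (q + 1) → (Fin d → ℤ) := fun t i => φ u i + (t : ℤ) * c i with hf
    have hfinj : Function.Injective f := by
      intro s t hst
      have := congrFun hst i₀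
      simp only [hf, add_right_inj] at this
      have : (s : ℤ) = t := mul_right_cancel₀ hi₀ this
      exact Fin.ext (by exact_mod_cast this)
    have hsub : Set.range f ⊆ segGridPts (φ u) (φ v) := by
      rintro _ ⟨t, rfl⟩
      have hq0 : (q : ℝ) ≠ 0 := by positivity
      rw [segGridPts, Set.mem_setOf_eq, segment_eq_image']
      refine ⟨(t : ℝ) / q, ⟨by positivity, ?_⟩, ?_⟩
      · rw [div_le_one (by positivity)]
        exact_mod_cast Nat.le_of_lt_succ t.isLt
      · funext i
        have hci' : ((φ v i : ℝ)) - φ u i = q * c i := by exact_mod_cast hci i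
        simp only [castPt, Pi.add_apply, Pi.smul_apply, Pi.sub_apply, smul_eq_mul, hf]
        push_cast
        rw [hci']
        field_simp
    have hcard : q + 1 ≤ (segGridPts (φ u) (φ v)).ncard := by
      calc q + 1 = (Set.range f).ncard := by
            rw [Set.ncard_eq_toFinset_card', Set.toFinset_range,
              Finset.card_image_of_injective _ hfinj]
            simp
        _ ≤ _ := Set.ncard_le_ncard hsub (segGridPts_finite _ _)
    have := hcnt u v hadj
    omega
  have C : G.Coloring (Fin d → ZMod q) :=
    Coloring.mk (fun v i => (φ v i : ZMod q)) hproper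
  have := C.colorable
  simpa [ZMod.card] using this
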